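/- arXiv:2411.05417 — 4 statements merged into one kernel-verified Lean document; each statement's English description precedes it below -/
import Mathlib

section
/- Let V₁ and V₂ be real-valued random variables on a probability space, let C ≥ 0 satisfy P(|V₁| ≤ ε) ≤ 2εC for every ε > 0, and let β > 0. Then for every α > 0, E[ |𝟙_{V₁ < 0} − 𝟙_{V₂ < 0}|^α ] ≤ 2^{(2β+1)/(1+β)} · C^{β/(1+β)} · E[ |V₁ − V₂|^β ]^{1/(1+β)}. -/
open MeasureTheory ENNReal

private lemma rpow_alg {C M β : ℝ} (hC : 0 < C) (hM : 0 < M) (hβ : 0 < β) :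
    2 * (M / (2 * C)) ^ (1 / (1 + β)) * C + M / ((M / (2 * C)) ^ (1 / (1 + β))) ^ β
      = 2 ^ ((2 * β + 1) / (1 + β)) * C ^ (β / (1 + β)) * M ^ (1 / (1 + β)) := by
  have h1β : (0:ℝ) < 1 + β := by linarith
  set p := 1 / (1 + β) with hp
  set q := β / (1 + β) with hq
  have hx : (0:ℝ) < 2 * C := by linarith
  have hpq : p + q = 1 := by rw [hp, hq]; field_simp
  have hpβ : p * β = q := by rw [hp, hq]; field_simp
  have hup : (0:ℝ) < (2*C) ^ p := Real.rpow_pos_of_pos hx p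
  have hvq : (0:ℝ) < (2*C) ^ q := Real.rpow_pos_of_pos hx q
  have hMp : (0:ℝ) < M ^ p := Real.rpow_pos_of_pos hM p
  have hMq : (0:ℝ) < M ^ q := Real.rpow_pos_of_pos hM q
  have t1 : 2 * (M / (2*C)) ^ p * C = (2*C) ^ q * M ^ p := by
    rw [Real.div_rpow hM.le hx.le, show q = 1 - p by linarith,
      Real.rpow_sub hx, Real.rpow_one]
    field_simp
  have t2 : M / ((M / (2*C)) ^ p) ^ β = (2*C) ^ q * M ^ p := by
    rw [← Real.rpow_mul (by positivity), hpβ, Real.div_rpow hM.le hx.le,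
      show p = 1 - q by linarith, Real.rpow_sub hM, Real.rpow_one]
    field_simp
  have hexp : (2 * β + 1) / (1 + β) = 1 + q := by rw [hq]; field_simp; ring
  rw [t1, t2, hexp, Real.rpow_add two_pos, Real.rpow_one,
    Real.mul_rpow two_pos.le hC.le]
  ring

/-- Avikainen-type estimate: if `P(|V₁| ≤ ε) ≤ 2εC` for all `ε > 0`, then for all `α, β > 0`,
`E[|𝟙_{V₁<0} - 𝟙_{V₂<0}|^α] ≤ 2^((2β+1)/(1+β)) C^(β/(1+β)) E[|V₁ - V₂|^β]^(1/(1+β))`. -/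
theorem avikainen_estimate
    {Ω : Type*} [MeasurableSpace Ω] (ℙ : Measure Ω) [IsProbabilityMeasure ℙ]
    (V₁ V₂ : Ω → ℝ) (hV₁ : Measurable V₁) (hV₂ : Measurable V₂)
    (C : ℝ) (hC : 0 ≤ C)
    (hsmall : ∀ ε : ℝ, 0 < ε → ℙ {ω | |V₁ ω| ≤ ε} ≤ ENNReal.ofReal (2 * ε * C))
    (β : ℝ) (hβ : 0 < β) (α : ℝ) (hα : 0 < α) :
    ∫⁻ ω, ENNReal.ofReal
        (|(if V₁ ω < 0 then (1 : ℝ) else 0) - (if V₂ ω < 0 then (1 : ℝ) else 0)| ^ α) ∂ℙ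
      ≤ ENNReal.ofReal (2 ^ ((2 * β + 1) / (1 + β)) * C ^ (β / (1 + β)))
        * (∫⁻ ω, ENNReal.ofReal (|V₁ ω - V₂ ω| ^ β) ∂ℙ) ^ (1 / (1 + β)) := by
  have h1β : (0:ℝ) < 1 + β := by linarith
  -- `C` must be positive
  have hC0 : 0 < C := by
    rcases hC.lt_or_eq with h | h
    · exact h
    · exfalso
      have h0 : ∀ n : ℕ, ℙ {ω | |V₁ ω| ≤ (n:ℝ)+1} = 0 := by
        intro n
        refine le_antisymm ?_ (zero_le)
        have := hsmall ((n:ℝ)+1) (by positivity)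
        simpa [← h] using this
      have huniv : (Set.univ : Set Ω) ⊆ ⋃ n : ℕ, {ω | |V₁ ω| ≤ (n:ℝ)+1} := by
        intro ω _
        obtain ⟨n, hn⟩ := exists_nat_ge (|V₁ ω|)
        exact Set.mem_iUnion.mpr ⟨n, by simp only [Set.mem_setOf_eq]; linarith⟩
      have hcontr : (1:ℝ≥0∞) ≤ 0 := by
        calc (1:ℝ≥0∞) = ℙ Set.univ := measure_univ.symm
          _ ≤ ℙ (⋃ n : ℕ, {ω | |V₁ ω| ≤ (n:ℝ)+1}) := measure_mono huniv
          _ ≤ ∑' n : ℕ, ℙ {ω | |V₁ ω| ≤ (n:ℝ)+1} := measure_iUnion_le _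
          _ = 0 := by simp [h0]
      simp at hcontr
  set m := ∫⁻ ω, ENNReal.ofReal (|V₁ ω - V₂ ω| ^ β) ∂ℙ with hm
  set D : Set Ω := {ω | V₁ ω < 0 ∧ ¬ (V₂ ω < 0)} ∪ {ω | ¬ (V₁ ω < 0) ∧ V₂ ω < 0} with hDdef
  have hDm : MeasurableSet D := by
    refine MeasurableSet.union ?_ ?_
    · exact (measurableSet_lt hV₁ measurable_const).inter
        (measurableSet_lt hV₂ measurable_const).compl
    · exact (measurableSet_lt hV₁ measurable_const).compl.inter
        (measurableSet_lt hV₂ measurable_const)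
  have hLHS : (∫⁻ ω, ENNReal.ofReal
      (|(if V₁ ω < 0 then (1 : ℝ) else 0) - (if V₂ ω < 0 then (1 : ℝ) else 0)| ^ α) ∂ℙ)
      = ℙ D := by
    rw [← lintegral_indicator_one hDm]
    refine lintegral_congr fun ω => ?_
    by_cases h1 : V₁ ω < 0 <;> by_cases h2 : V₂ ω < 0 <;>
      simp [Set.indicator, hDdef, h1, h2, ← not_lt, Real.one_rpow, Real.zero_rpow hα.ne']
  -- measurability of the integrand
  have hf : Measurable fun ω => ENNReal.ofReal (|V₁ ω - V₂ ω| ^ β) :=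
    (((Real.continuous_rpow_const hβ.le).measurable).comp (hV₁.sub hV₂).abs).ennreal_ofReal
  -- the key bound for every ε > 0
  have key : ∀ ε : ℝ, 0 < ε →
      ℙ D ≤ ENNReal.ofReal (2 * ε * C) + m / ENNReal.ofReal (ε ^ β) := by
    intro ε hε
    have hsub : D ⊆ {ω | |V₁ ω| ≤ ε} ∪
        {ω | ENNReal.ofReal (ε ^ β) ≤ ENNReal.ofReal (|V₁ ω - V₂ ω| ^ β)} := by
      intro ω hω
      by_cases habs : |V₁ ω| ≤ ε
      · exact Or.inl habs
      · push_neg at habs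
        right
        have hd : ε ≤ |V₁ ω - V₂ ω| := by
          rcases hω with ⟨h1, h2⟩ | ⟨h1, h2⟩
          · push_neg at h2
            rw [abs_of_neg h1] at habs
            exact le_abs.mpr (Or.inr (by linarith))
          · push_neg at h1
            rw [abs_of_nonneg h1] at habs
            exact le_abs.mpr (Or.inl (by linarith))
        exact ENNReal.ofReal_le_ofReal (Real.rpow_le_rpow hε.le hd hβ.le)
    calc ℙ D ≤ ℙ ({ω | |V₁ ω| ≤ ε} ∪
        {ω | ENNReal.ofReal (ε ^ β) ≤ ENNReal.ofReal (|V₁ ω - V₂ ω| ^ β)}) :=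
          measure_mono hsub
      _ ≤ ℙ {ω | |V₁ ω| ≤ ε} +
          ℙ {ω | ENNReal.ofReal (ε ^ β) ≤ ENNReal.ofReal (|V₁ ω - V₂ ω| ^ β)} :=
          measure_union_le _ _
      _ ≤ ENNReal.ofReal (2 * ε * C) + m / ENNReal.ofReal (ε ^ β) := by
          refine add_le_add (hsmall ε hε) ?_
          exact meas_ge_le_lintegral_div hf.aemeasurable
            (ENNReal.ofReal_pos.mpr (Real.rpow_pos_of_pos hε β)).ne'
            ENNReal.ofReal_ne_top
  rw [hLHS]
  rcases eq_top_or_lt_top m with hmt | hmf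
  · have hrt : m ^ (1 / (1 + β)) = ⊤ := by
      rw [hmt]; exact ENNReal.top_rpow_of_pos (by positivity)
    rw [hrt, ENNReal.mul_top (by
      simp only [ne_eq, ENNReal.ofReal_eq_zero, not_le]
      positivity)]
    exact le_top
  · set M := m.toReal with hMdef
    have hMm : m = ENNReal.ofReal M := (ENNReal.ofReal_toReal hmf.ne).symm
    have hMnn : (0:ℝ) ≤ M := ENNReal.toReal_nonneg
    rcases hMnn.eq_or_lt with hM0 | hM0
    · -- m = 0 : then ℙ D = 0
      have h2 : ∀ ε : ℝ, 0 < ε → (ℙ D).toReal ≤ 2 * ε * C := by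
        intro ε hε
        have hk := key ε hε
        have hM0' : M = 0 := hM0.symm
        rw [hMm, hM0', ENNReal.ofReal_zero, ENNReal.zero_div, add_zero] at hk
        calc (ℙ D).toReal ≤ (ENNReal.ofReal (2 * ε * C)).toReal :=
            ENNReal.toReal_mono ENNReal.ofReal_ne_top hk
          _ = 2 * ε * C := ENNReal.toReal_ofReal (by positivity)
      have h3 : (ℙ D).toReal ≤ 0 := by
        by_contra h
        push_neg at h
        have hk := h2 ((ℙ D).toReal / (4 * C)) (by positivity)
        have heq : 2 * ((ℙ D).toReal / (4 * C)) * C = (ℙ D).toReal / 2 := by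
          field_simp; ring
        rw [heq] at hk
        linarith
      have hD0 : ℙ D = 0 := by
        have := le_antisymm h3 ENNReal.toReal_nonneg
        rcases (ENNReal.toReal_eq_zero_iff _).mp this with h | h
        · exact h
        · exact absurd h (measure_ne_top ℙ D)
      rw [hD0]
      exact zero_le
    · -- main case : 0 < M
      set ε := (M / (2 * C)) ^ (1 / (1 + β)) with hεdef
      have hε : 0 < ε := Real.rpow_pos_of_pos (by positivity) _
      have hεβ : 0 < ε ^ β := Real.rpow_pos_of_pos hε β
      have hkey := key ε hε
      have hdiv : m / ENNReal.ofReal (ε ^ β) = ENNReal.ofReal (M / ε ^ β) := by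
        rw [hMm]
        exact (ENNReal.ofReal_div_of_pos hεβ).symm
      rw [hdiv, ← ENNReal.ofReal_add (by positivity) (by positivity)] at hkey
      have hRHS : ENNReal.ofReal (2 ^ ((2 * β + 1) / (1 + β)) * C ^ (β / (1 + β)))
          * m ^ (1 / (1 + β))
          = ENNReal.ofReal (2 ^ ((2 * β + 1) / (1 + β)) * C ^ (β / (1 + β))
              * M ^ (1 / (1 + β))) := by
        rw [hMm, ENNReal.ofReal_rpow_of_pos hM0, ← ENNReal.ofReal_mul (by positivity)]
      rw [hRHS]
      refine hkey.trans (ENNReal.ofReal_le_ofReal ?_)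
      have halg := rpow_alg hC0 hM0 hβ
      rw [← hεdef] at halg
      exact halg.le
end

section
/- Let 𝒳 ⊆ ℝ^d be a nonempty closed convex set, ν ∈ (0, 1], L > 0, and let f : ℝ^d → ℝ be differentiable with ‖∇f(y) − ∇f(x)‖ ≤ L‖y − x‖^ν for all x, y ∈ 𝒳. Let x ∈ 𝒳, γ > 0, and G ∈ ℝ^d. Let x⁺ be the Euclidean projection of x − γG onto 𝒳 and set g̃ := (x − x⁺)/γ; let x• be the Euclidean projection of x − γ∇f(x) onto 𝒳 and set g := (x − x•)/γ. Then f(x⁺) ≤ f(x) − γ‖g̃‖² − γ⟨∇f(x) − G, g⟩ + γ‖∇f(x) − G‖² + (L γ^{1+ν}/(1+ν)) ‖G‖^{1+ν}. -/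
open InnerProductSpace

lemma grad_fderiv_aux {d : ℕ} (f : EuclideanSpace ℝ (Fin d) → ℝ) {z : EuclideanSpace ℝ (Fin d)}
    (hf : DifferentiableAt ℝ f z) (v : EuclideanSpace ℝ (Fin d)) :
    fderiv ℝ f z v = ⟪gradient f z, v⟫_ℝ := by
  rw [hf.hasGradientAt.hasFDerivAt.fderiv, InnerProductSpace.toDual_apply_apply]

lemma holder_descent_aux {d : ℕ} {𝒳 : Set (EuclideanSpace ℝ (Fin d))} (hconv : Convex ℝ 𝒳)
    {ν L : ℝ} (hν : 0 < ν) (hL : 0 ≤ L)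
    {f : EuclideanSpace ℝ (Fin d) → ℝ} (hf : Differentiable ℝ f)
    (hHolder : ∀ x ∈ 𝒳, ∀ y ∈ 𝒳, ‖gradient f y - gradient f x‖ ≤ L * ‖y - x‖ ^ ν)
    {x y : EuclideanSpace ℝ (Fin d)} (hx : x ∈ 𝒳) (hy : y ∈ 𝒳) :
    f y ≤ f x + ⟪gradient f x, y - x⟫_ℝ + L / (1 + ν) * ‖y - x‖ ^ (1 + ν) := by
  set p : ℝ → EuclideanSpace ℝ (Fin d) := fun t => x + t • (y - x) with hp
  have hpC : Continuous p := by fun_prop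
  have hpd : ∀ t : ℝ, HasDerivAt p (y - x) t := by
    intro t
    simpa [hp] using ((hasDerivAt_id t).smul_const (y - x)).const_add x
  have pmem : ∀ t ∈ Set.Icc (0:ℝ) 1, p t ∈ 𝒳 := by
    intro t ht
    have := hconv hx hy (by linarith [ht.2] : (0:ℝ) ≤ 1 - t) ht.1 (by ring)
    convert this using 1
    simp only [hp]
    module
  set φ' : ℝ → ℝ := fun t => fderiv ℝ f (p t) (y - x) with hφ'
  have hφ : ∀ t : ℝ, HasDerivAt (f ∘ p) (φ' t) t := fun t =>
    (hf (p t)).hasFDerivAt.comp_hasDerivAt t (hpd t)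
  have hdist : ∀ t ∈ Set.Icc (0:ℝ) 1, ‖p t - x‖ = t * ‖y - x‖ := by
    intro t ht
    have : p t - x = t • (y - x) := by simp [hp]
    rw [this, norm_smul, Real.norm_eq_abs, abs_of_nonneg ht.1]
  -- integrability
  have hmeas : Measurable φ' :=
    (measurable_fderiv_apply_const ℝ f (y - x)).comp hpC.measurable
  have hbd : ∀ t ∈ Set.Icc (0:ℝ) 1,
      ‖φ' t‖ ≤ (‖gradient f x‖ + L * ‖y - x‖ ^ ν) * ‖y - x‖ := by
    intro t ht
    have h1 : ‖gradient f (p t)‖ ≤ ‖gradient f x‖ + L * ‖y - x‖ ^ ν := by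
      have h2 := hHolder x hx (p t) (pmem t ht)
      have h3 : ‖p t - x‖ ^ ν ≤ ‖y - x‖ ^ ν := by
        apply Real.rpow_le_rpow (norm_nonneg _) _ hν.le
        rw [hdist t ht]
        nlinarith [norm_nonneg (y - x), ht.1, ht.2]
      have := norm_le_norm_add_norm_sub' (gradient f (p t)) (gradient f x)
      nlinarith [norm_nonneg (gradient f (p t) - gradient f x)]
    simp only [hφ']
    rw [grad_fderiv_aux f (hf (p t))]
    calc ‖⟪gradient f (p t), y - x⟫_ℝ‖ ≤ ‖gradient f (p t)‖ * ‖y - x‖ :=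
          norm_inner_le_norm _ _
      _ ≤ _ := by nlinarith [norm_nonneg (y - x)]
  have hint : IntervalIntegrable φ' MeasureTheory.volume 0 1 := by
    rw [intervalIntegrable_iff, Set.uIoc_of_le zero_le_one]
    apply MeasureTheory.Measure.integrableOn_of_bounded
      (M := (‖gradient f x‖ + L * ‖y - x‖ ^ ν) * ‖y - x‖)
    · exact measure_Ioc_lt_top.ne
    · exact hmeas.aestronglyMeasurable
    · exact (MeasureTheory.ae_restrict_iff' measurableSet_Ioc).2 <|
        MeasureTheory.ae_of_all _ fun t ht => hbd t ⟨ht.1.le, ht.2⟩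
  have key : ∫ t in (0:ℝ)..1, φ' t = f y - f x := by
    have := intervalIntegral.integral_eq_sub_of_hasDerivAt
      (f := f ∘ p) (f' := φ') (fun t _ => hφ t) hint
    simpa [hp] using this
  have hp0 : p 0 = x := by simp [hp]
  have hφ'0 : φ' 0 = ⟪gradient f x, y - x⟫_ℝ := by
    simp only [hφ', hp0]
    exact grad_fderiv_aux f (hf x) _
  have hub : ∀ t ∈ Set.Icc (0:ℝ) 1,
      φ' t ≤ ⟪gradient f x, y - x⟫_ℝ + (L * ‖y - x‖ ^ (1 + ν)) * t ^ ν := by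
    intro t ht
    have h2 := hHolder x hx (p t) (pmem t ht)
    have hdec : φ' t = ⟪gradient f x, y - x⟫_ℝ
        + ⟪gradient f (p t) - gradient f x, y - x⟫_ℝ := by
      simp only [hφ']
      rw [grad_fderiv_aux f (hf (p t)), inner_sub_left]
      ring
    have h3 : ⟪gradient f (p t) - gradient f x, y - x⟫_ℝ
        ≤ ‖gradient f (p t) - gradient f x‖ * ‖y - x‖ := real_inner_le_norm _ _
    have h4 : ‖p t - x‖ ^ ν = t ^ ν * ‖y - x‖ ^ ν := by
      rw [hdist t ht, Real.mul_rpow ht.1 (norm_nonneg _)]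
    have h5 : ‖y - x‖ ^ (1 + ν) = ‖y - x‖ * ‖y - x‖ ^ ν := by
      rw [Real.rpow_add' (norm_nonneg _) (by positivity), Real.rpow_one]
    have h6 : ‖gradient f (p t) - gradient f x‖ * ‖y - x‖
        ≤ (L * ‖p t - x‖ ^ ν) * ‖y - x‖ :=
      mul_le_mul_of_nonneg_right h2 (norm_nonneg _)
    have h7 : (L * ‖p t - x‖ ^ ν) * ‖y - x‖ = (L * ‖y - x‖ ^ (1 + ν)) * t ^ ν := by
      rw [h4, h5]; ring
    linarith
  have hRHSint : IntervalIntegrable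
      (fun t => ⟪gradient f x, y - x⟫_ℝ + (L * ‖y - x‖ ^ (1 + ν)) * t ^ ν)
      MeasureTheory.volume 0 1 :=
    intervalIntegrable_const.add
      ((intervalIntegral.intervalIntegrable_rpow' (by linarith)).const_mul _)
  have hmono := intervalIntegral.integral_mono_on zero_le_one hint hRHSint
    (fun t ht => hub t ht)
  have hcalc : (∫ t in (0:ℝ)..1,
      (⟪gradient f x, y - x⟫_ℝ + (L * ‖y - x‖ ^ (1 + ν)) * t ^ ν))
      = ⟪gradient f x, y - x⟫_ℝ + L / (1 + ν) * ‖y - x‖ ^ (1 + ν) := by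
    rw [intervalIntegral.integral_add intervalIntegrable_const
        ((intervalIntegral.intervalIntegrable_rpow' (by linarith)).const_mul _),
      intervalIntegral.integral_const, intervalIntegral.integral_const_mul,
      integral_rpow (Or.inl (by linarith))]
    rw [Real.one_rpow, Real.zero_rpow (by positivity)]
    have : (1:ℝ) + ν ≠ 0 := by positivity
    field_simp
    ring
  rw [key, hcalc] at hmono
  linarith

/-- One-step descent inequality of the stochastic projected gradient iteration: with
`x⁺ = proj_𝒳(x - γG)`, `g̃ = (x - x⁺)/γ`, `x• = proj_𝒳(x - γ∇f(x))`, `g = (x - x•)/γ`,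
`f(x⁺) ≤ f(x) - γ‖g̃‖² - γ⟪∇f(x) - G, g⟫ + γ‖∇f(x) - G‖² + (Lγ^(1+ν)/(1+ν))‖G‖^(1+ν)`. -/
theorem one_step_descent
    {d : ℕ} (𝒳 : Set (EuclideanSpace ℝ (Fin d)))
    (h𝒳ne : 𝒳.Nonempty) (h𝒳closed : IsClosed 𝒳) (h𝒳conv : Convex ℝ 𝒳)
    (ν : ℝ) (hν : ν ∈ Set.Ioc (0 : ℝ) 1) (L : ℝ) (hL : 0 < L)
    (f : EuclideanSpace ℝ (Fin d) → ℝ) (hf : Differentiable ℝ f)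
    (hHolder : ∀ x ∈ 𝒳, ∀ y ∈ 𝒳, ‖gradient f y - gradient f x‖ ≤ L * ‖y - x‖ ^ ν)
    (x : EuclideanSpace ℝ (Fin d)) (hx : x ∈ 𝒳) (γ : ℝ) (hγ : 0 < γ)
    (G : EuclideanSpace ℝ (Fin d))
    (xplus : EuclideanSpace ℝ (Fin d)) (hxplus : xplus ∈ 𝒳)
    (hprojplus : ∀ y ∈ 𝒳, ⟪(x - γ • G) - xplus, y - xplus⟫_ℝ ≤ 0)
    (xdot : EuclideanSpace ℝ (Fin d)) (hxdot : xdot ∈ 𝒳)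
    (hprojdot : ∀ y ∈ 𝒳, ⟪(x - γ • gradient f x) - xdot, y - xdot⟫_ℝ ≤ 0) :
    f xplus ≤ f x - γ * ‖γ⁻¹ • (x - xplus)‖ ^ 2
      - γ * ⟪gradient f x - G, γ⁻¹ • (x - xdot)⟫_ℝ
      + γ * ‖gradient f x - G‖ ^ 2
      + L * γ ^ (1 + ν) / (1 + ν) * ‖G‖ ^ (1 + ν) := by
  set u := gradient f x with hu
  -- A: projection inequality at y = x
  have hA' : ⟪(x - xplus) - γ • G, x - xplus⟫_ℝ ≤ 0 := by
    have h := hprojplus x hx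
    rwa [show (x - γ • G) - xplus = (x - xplus) - γ • G from by module] at h
  have hA2 : ‖x - xplus‖ ^ 2 ≤ γ * ⟪G, x - xplus⟫_ℝ := by
    rw [inner_sub_left, real_inner_smul_left, real_inner_self_eq_norm_sq] at hA'
    linarith
  -- C: ‖x - xplus‖ ≤ γ‖G‖
  have hC : ‖x - xplus‖ ≤ γ * ‖G‖ := by
    have h := hA2.trans (mul_le_mul_of_nonneg_left (real_inner_le_norm G (x - xplus)) hγ.le)
    rcases (norm_nonneg (x - xplus)).eq_or_lt with h0 | h0
    · rw [← h0]; positivity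
    · nlinarith
  -- B: ‖xdot - xplus‖ ≤ γ‖u - G‖
  have hB1 := hprojplus xdot hxdot
  have hB2 := hprojdot xplus hxplus
  have hBsum : ⟪(xdot - xplus) - γ • (G - u), xdot - xplus⟫_ℝ ≤ 0 := by
    have e1 : (x - γ • G) - xplus
        = ((x - γ • u) - xdot) + ((xdot - xplus) - γ • (G - u)) := by module
    rw [e1, inner_add_left] at hB1
    rw [show xplus - xdot = -(xdot - xplus) from by module, inner_neg_right] at hB2
    linarith
  have hB : ‖xdot - xplus‖ ≤ γ * ‖u - G‖ := by
    rw [inner_sub_left, real_inner_smul_left, real_inner_self_eq_norm_sq] at hBsum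
    have h := real_inner_le_norm (G - u) (xdot - xplus)
    have hrev : ‖G - u‖ = ‖u - G‖ := norm_sub_rev _ _
    have h2 : ‖xdot - xplus‖ ^ 2 ≤ γ * (‖u - G‖ * ‖xdot - xplus‖) := by
      have h3 := mul_le_mul_of_nonneg_left h hγ.le
      rw [hrev] at h3
      linarith
    rcases (norm_nonneg (xdot - xplus)).eq_or_lt with h0 | h0
    · rw [← h0]; positivity
    · nlinarith
  -- descent lemma
  have hdes := holder_descent_aux h𝒳conv hν.1 hL.le hf hHolder hx hxplus
  -- rewrites
  have e3 : γ * ‖γ⁻¹ • (x - xplus)‖ ^ 2 = ‖x - xplus‖ ^ 2 / γ := by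
    rw [norm_smul, Real.norm_eq_abs, abs_of_pos (inv_pos.2 hγ)]
    field_simp
  have e4 : γ * ⟪u - G, γ⁻¹ • (x - xdot)⟫_ℝ = ⟪u - G, x - xdot⟫_ℝ := by
    rw [real_inner_smul_right]
    field_simp
  have e5 : L * γ ^ (1 + ν) / (1 + ν) * ‖G‖ ^ (1 + ν)
      = L / (1 + ν) * ((γ * ‖G‖) ^ (1 + ν)) := by
    rw [Real.mul_rpow hγ.le (norm_nonneg _)]; ring
  have hH : L / (1 + ν) * ‖xplus - x‖ ^ (1 + ν)
      ≤ L / (1 + ν) * ((γ * ‖G‖) ^ (1 + ν)) := by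
    have h1ν : (0:ℝ) < 1 + ν := by linarith [hν.1]
    apply mul_le_mul_of_nonneg_left _ (by positivity)
    apply Real.rpow_le_rpow (norm_nonneg _) _ h1ν.le
    rw [norm_sub_rev]; exact hC
  have d1 : ⟪u, xplus - x⟫_ℝ
      = -⟪G, x - xplus⟫_ℝ - ⟪u - G, x - xdot⟫_ℝ + ⟪u - G, xplus - xdot⟫_ℝ := by
    simp only [inner_sub_left, inner_sub_right]
    ring
  have k1 : ‖x - xplus‖ ^ 2 / γ ≤ ⟪G, x - xplus⟫_ℝ := by
    rw [div_le_iff₀ hγ]; linarith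
  have k2 : ⟪u - G, xplus - xdot⟫_ℝ ≤ γ * ‖u - G‖ ^ 2 := by
    calc ⟪u - G, xplus - xdot⟫_ℝ ≤ ‖u - G‖ * ‖xplus - xdot‖ := real_inner_le_norm _ _
      _ = ‖u - G‖ * ‖xdot - xplus‖ := by rw [norm_sub_rev xplus xdot]
      _ ≤ ‖u - G‖ * (γ * ‖u - G‖) := mul_le_mul_of_nonneg_left hB (norm_nonneg _)
      _ = γ * ‖u - G‖ ^ 2 := by ring
  rw [e3, e4, e5]
  linarith
end

section
/- Let 𝒳 ⊆ ℝ^d be a nonempty closed convex set, ν ∈ (0, 1], L > 0, and let f : ℝ^d → ℝ be differentiable with ‖∇f(y) − ∇f(x)‖ ≤ L‖y − x‖^ν for all x, y ∈ 𝒳. Let x ∈ 𝒳, γ > 0, G ∈ ℝ^d, let x⁺ be the Euclidean projection of x − γG onto 𝒳, and set g̃ := (x − x⁺)/γ and v := (x − x⁺)/γ + ∇f(x⁺) − G. Then: (i) the vector v − ∇f(x⁺) = (x − x⁺)/γ − G lies in the normal cone of 𝒳 at x⁺, i.e. ⟨(x − x⁺)/γ − G, y − x⁺⟩ ≤ 0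 for all y ∈ 𝒳; and (ii) ‖v‖ ≤ ‖g̃‖ + L γ^ν ‖g̃‖^ν + ‖∇f(x) − G‖. In particular, the distance from 0 to the set ∇f(x⁺) + N_𝒳(x⁺) is at most ‖g̃‖ + L γ^ν ‖g̃‖^ν + ‖∇f(x) − G‖. -/
open InnerProductSpace

/-- Stationarity-measure bound for a projected step: with `x⁺ = proj_𝒳(x - γG)`,
`g̃ = (x - x⁺)/γ` and `v = (x - x⁺)/γ + ∇f(x⁺) - G`, (i) `v - ∇f(x⁺)` lies in the normal
cone of `𝒳` at `x⁺`, (ii) `‖v‖ ≤ ‖g̃‖ + Lγ^ν‖g̃‖^ν + ‖∇f(x) - G‖`, and in particular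
`dist(0, ∇f(x⁺) + N_𝒳(x⁺)) ≤ ‖g̃‖ + Lγ^ν‖g̃‖^ν + ‖∇f(x) - G‖`. -/
theorem normal_cone_stationarity_bound
    {d : ℕ} (𝒳 : Set (EuclideanSpace ℝ (Fin d)))
    (h𝒳ne : 𝒳.Nonempty) (h𝒳closed : IsClosed 𝒳) (h𝒳conv : Convex ℝ 𝒳)
    (ν : ℝ) (hν : ν ∈ Set.Ioc (0 : ℝ) 1) (L : ℝ) (hL : 0 < L)
    (f : EuclideanSpace ℝ (Fin d) → ℝ) (hf : Differentiable ℝ f)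
    (hHolder : ∀ x ∈ 𝒳, ∀ y ∈ 𝒳, ‖gradient f y - gradient f x‖ ≤ L * ‖y - x‖ ^ ν)
    (x : EuclideanSpace ℝ (Fin d)) (hx : x ∈ 𝒳) (γ : ℝ) (hγ : 0 < γ)
    (G : EuclideanSpace ℝ (Fin d))
    (xplus : EuclideanSpace ℝ (Fin d)) (hxplus : xplus ∈ 𝒳)
    (hproj : ∀ y ∈ 𝒳, ⟪(x - γ • G) - xplus, y - xplus⟫_ℝ ≤ 0) :
    (∀ y ∈ 𝒳, ⟪γ⁻¹ • (x - xplus) - G, y - xplus⟫_ℝ ≤ 0)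
    ∧ ‖γ⁻¹ • (x - xplus) + gradient f xplus - G‖
        ≤ ‖γ⁻¹ • (x - xplus)‖ + L * γ ^ ν * ‖γ⁻¹ • (x - xplus)‖ ^ ν
          + ‖gradient f x - G‖
    ∧ Metric.infDist (0 : EuclideanSpace ℝ (Fin d))
        {v | ∃ u, (∀ y ∈ 𝒳, ⟪u, y - xplus⟫_ℝ ≤ 0) ∧ v = gradient f xplus + u}
        ≤ ‖γ⁻¹ • (x - xplus)‖ + L * γ ^ ν * ‖γ⁻¹ • (x - xplus)‖ ^ ν
          + ‖gradient f x - G‖ := by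
  have hkey : (x - γ • G) - xplus = γ • (γ⁻¹ • (x - xplus) - G) := by
    rw [smul_sub, smul_smul, mul_inv_cancel₀ hγ.ne', one_smul]
    abel
  have part1 : ∀ y ∈ 𝒳, ⟪γ⁻¹ • (x - xplus) - G, y - xplus⟫_ℝ ≤ 0 := by
    intro y hy
    have h := hproj y hy
    rw [hkey, real_inner_smul_left] at h
    nlinarith
  -- norm identity : ‖x - xplus‖ = γ * ‖g̃‖
  have hnorm : ‖x - xplus‖ = γ * ‖γ⁻¹ • (x - xplus)‖ := by
    rw [norm_smul, Real.norm_eq_abs, abs_of_pos (inv_pos.mpr hγ), ← mul_assoc,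
      mul_inv_cancel₀ hγ.ne', one_mul]
  have hHol : ‖gradient f xplus - gradient f x‖
      ≤ L * γ ^ ν * ‖γ⁻¹ • (x - xplus)‖ ^ ν := by
    have h := hHolder x hx xplus hxplus
    have hxx : ‖xplus - x‖ = ‖x - xplus‖ := norm_sub_rev _ _
    rw [hxx, hnorm, Real.mul_rpow hγ.le (norm_nonneg _)] at h
    linarith [h]
  have part2 : ‖γ⁻¹ • (x - xplus) + gradient f xplus - G‖
      ≤ ‖γ⁻¹ • (x - xplus)‖ + L * γ ^ ν * ‖γ⁻¹ • (x - xplus)‖ ^ ν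
        + ‖gradient f x - G‖ := by
    have hdecomp : γ⁻¹ • (x - xplus) + gradient f xplus - G
        = γ⁻¹ • (x - xplus) + (gradient f xplus - gradient f x)
          + (gradient f x - G) := by abel
    calc ‖γ⁻¹ • (x - xplus) + gradient f xplus - G‖
        ≤ ‖γ⁻¹ • (x - xplus) + (gradient f xplus - gradient f x)‖
          + ‖gradient f x - G‖ := by rw [hdecomp]; exact norm_add_le _ _
      _ ≤ ‖γ⁻¹ • (x - xplus)‖ + ‖gradient f xplus - gradient f x‖
          + ‖gradient f x - G‖ := by
            gcongr; exact norm_add_le _ _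
      _ ≤ _ := by linarith
  refine ⟨part1, part2, ?_⟩
  have hmem : γ⁻¹ • (x - xplus) + gradient f xplus - G
      ∈ {v | ∃ u, (∀ y ∈ 𝒳, ⟪u, y - xplus⟫_ℝ ≤ 0) ∧ v = gradient f xplus + u} := by
    exact ⟨γ⁻¹ • (x - xplus) - G, part1, by abel⟩
  calc Metric.infDist (0 : EuclideanSpace ℝ (Fin d)) _
      ≤ dist 0 (γ⁻¹ • (x - xplus) + gradient f xplus - G) :=
        Metric.infDist_le_dist_of_mem hmem
    _ = ‖γ⁻¹ • (x - xplus) + gradient f xplus - G‖ := by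
        rw [dist_eq_norm, zero_sub, norm_neg]
    _ ≤ _ := part2
end

section
/- Let 𝒳 ⊆ ℝ^d be a nonempty closed convex set, L > 0, σ > 0, and let f : ℝ^d → ℝ be differentiable with Lipschitz gradient on 𝒳: ‖∇f(y) − ∇f(x)‖ ≤ L‖y − x‖ for all x, y ∈ 𝒳, and f ≥ f* on 𝒳. On a probability space with filtration (𝓕_k), let γ_k > 0 with γ_k ≤ γ̄ for some γ̄ > 0, m_k ≥ 1, x_0 ∈ 𝒳 deterministic, and let (x_k), (G_k) be random sequences in ℝ^d with: x_k 𝓕_k-measurable with values in 𝒳; E[G_k | 𝓕_k] = ∇f(x_k) a.s.; E[‖∇f(x_k) − G_k‖²] ≤ σ²/m_k; E[‖G_k‖²] ≤ σ²; and x_{k+1} almost surely the Euclidean projection of x_k − γ_k G_k onto 𝒳. Then for every N ≥ 1, min_{k=0,…,N−1} E[ dist(0, ∇f(x_{k+1}) + N_𝒳(x_{k+1})) ] ≤ [ (1+Lγ̄) √N √( Δ + σ² Σ_{k=0}^{N−1}(γ_k/m_k) + (Lσ²/2) Σ_{k=0}^{N−1} γ_k² ) + σ Σ_{k=0}^{N−1}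 √(γ_k/m_k) ] / Σ_{k=0}^{N−1} √γ_k, where Δ := f(x_0) − f*. -/
open MeasureTheory InnerProductSpace

section Aux

variable {E : Type*} [NormedAddCommGroup E] [InnerProductSpace ℝ E]

/-- Uniqueness of points satisfying the projection variational inequality. -/
lemma spg_proj_unique {𝒳 : Set E} {z p q : E} (hp : p ∈ 𝒳) (hq : q ∈ 𝒳)
    (hvp : ∀ y ∈ 𝒳, ⟪z - p, y - p⟫_ℝ ≤ 0) (hvq : ∀ y ∈ 𝒳, ⟪z - q, y - q⟫_ℝ ≤ 0) :
    p = q := by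
  have h1 := hvp q hq
  have h2 := hvq p hp
  have key : ⟪q - p, q - p⟫_ℝ ≤ 0 := by
    have e1 : ⟪q - p, q - p⟫_ℝ = ⟪z - p, q - p⟫_ℝ - ⟪z - q, q - p⟫_ℝ := by
      rw [← inner_sub_left]; congr 1; abel
    have e2 : ⟪z - q, q - p⟫_ℝ = -⟪z - q, p - q⟫_ℝ := by
      rw [show q - p = -(p - q) by abel, inner_neg_right]
    rw [e1, e2]
    linarith
  have : q - p = 0 := by
    have := real_inner_self_nonpos.mp key
    exact this
  have := sub_eq_zero.mp this
  exact this.symm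

/-- Descent lemma: quadratic upper bound from Lipschitz gradient on a convex set. -/
lemma spg_descent [CompleteSpace E] {f : E → ℝ} (hf : Differentiable ℝ f)
    {𝒳 : Set E} (hconv : Convex ℝ 𝒳) {L : ℝ} (hL : 0 ≤ L)
    (hLip : ∀ x ∈ 𝒳, ∀ y ∈ 𝒳, ‖gradient f y - gradient f x‖ ≤ L * ‖y - x‖)
    {a b : E} (ha : a ∈ 𝒳) (hb : b ∈ 𝒳) :
    f b ≤ f a + ⟪gradient f a, b - a⟫_ℝ + L / 2 * ‖b - a‖ ^ 2 := by
  set v := b - a with hv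
  have hfd : ∀ z : E, ⟪gradient f z, v⟫_ℝ = fderiv ℝ f z v := by
    intro z
    simp only [gradient]
    exact toDual_symm_apply
  set φ : ℝ → ℝ := fun t => f (a + t • v) - t * ⟪gradient f a, v⟫_ℝ
      - L / 2 * ‖v‖ ^ 2 * t ^ 2 with hφ
  have hline : ∀ t : ℝ, HasDerivAt (fun s : ℝ => a + s • v) v t := by
    intro t
    simpa using ((hasDerivAt_id t).smul_const v).const_add a
  have hφd : ∀ t : ℝ, HasDerivAt φ
      (⟪gradient f (a + t • v), v⟫_ℝ - ⟪gradient f a, v⟫_ℝ - L * ‖v‖ ^ 2 * t) t := by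
    intro t
    have h1 : HasDerivAt (fun s : ℝ => f (a + s • v)) (fderiv ℝ f (a + t • v) v) t :=
      (hf (a + t • v)).hasFDerivAt.comp_hasDerivAt t (hline t)
    have h2 : HasDerivAt (fun s : ℝ => s * ⟪gradient f a, v⟫_ℝ) (⟪gradient f a, v⟫_ℝ) t := by
      simpa using (hasDerivAt_id t).mul_const (⟪gradient f a, v⟫_ℝ)
    have h3 : HasDerivAt (fun s : ℝ => L / 2 * ‖v‖ ^ 2 * s ^ 2) (L * ‖v‖ ^ 2 * t) t := by
      have := (hasDerivAt_pow 2 t).const_mul (L / 2 * ‖v‖ ^ 2)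
      exact this.congr_deriv (by ring)
    have := (h1.sub h2).sub h3
    rw [hfd]
    exact this
  have hmem : ∀ t : ℝ, t ∈ Set.Icc (0:ℝ) 1 → a + t • v ∈ 𝒳 := by
    intro t ht
    have : (1 - t) • a + t • b ∈ 𝒳 := hconv ha hb (by linarith [ht.2]) ht.1 (by ring)
    have he : a + t • v = (1 - t) • a + t • b := by
      rw [hv]; module
    rwa [he]
  have hanti : AntitoneOn φ (Set.Icc (0:ℝ) 1) := by
    apply antitoneOn_of_deriv_nonpos (convex_Icc 0 1)
    · exact (fun t _ => (hφd t).differentiableAt.continuousAt.continuousWithinAt)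
    · exact fun t _ => (hφd t).differentiableAt.differentiableWithinAt
    · intro t ht
      rw [interior_Icc] at ht
      rw [(hφd t).deriv]
      have hmem0 : a + t • v ∈ 𝒳 := hmem t ⟨le_of_lt ht.1, le_of_lt ht.2⟩
      have hb1 : ⟪gradient f (a + t • v), v⟫_ℝ - ⟪gradient f a, v⟫_ℝ
          = ⟪gradient f (a + t • v) - gradient f a, v⟫_ℝ := (inner_sub_left _ _ _).symm
      have hb2 : ⟪gradient f (a + t • v) - gradient f a, v⟫_ℝ
          ≤ ‖gradient f (a + t • v) - gradient f a‖ * ‖v‖ := real_inner_le_norm _ _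
      have hb3 : ‖gradient f (a + t • v) - gradient f a‖ ≤ L * ‖a + t • v - a‖ :=
        hLip a ha _ hmem0
      have hb4 : ‖a + t • v - a‖ = t * ‖v‖ := by
        rw [show a + t • v - a = t • v by abel, norm_smul]
        simp [abs_of_nonneg (le_of_lt ht.1)]
      have hb3' : ‖gradient f (a + t • v) - gradient f a‖ ≤ L * (t * ‖v‖) := by
        rw [hb4] at hb3; linarith
      have hb5 : ‖gradient f (a + t • v) - gradient f a‖ * ‖v‖ ≤ L * (t * ‖v‖) * ‖v‖ :=
        mul_le_mul_of_nonneg_right hb3' (norm_nonneg v)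
      have he : L * (t * ‖v‖) * ‖v‖ = L * ‖v‖ ^ 2 * t := by ring
      linarith
  have h01 := hanti (Set.mem_Icc.mpr ⟨le_refl 0, zero_le_one⟩)
      (Set.mem_Icc.mpr ⟨zero_le_one, le_refl 1⟩) zero_le_one
  have hφ0 : φ 0 = f a := by simp [hφ]
  have hφ1 : φ 1 = f b - ⟪gradient f a, v⟫_ℝ - L / 2 * ‖v‖ ^ 2 := by
    simp [hφ, hv]
  rw [hφ0, hφ1] at h01
  linarith

end Aux

section Aux2

variable {E : Type*} [NormedAddCommGroup E] [InnerProductSpace ℝ E]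

/-- Existence of a projection map onto a nonempty closed convex set,
with variational inequality and nonexpansiveness. -/
lemma spg_proj_exists [CompleteSpace E] {𝒳 : Set E} (hne : 𝒳.Nonempty)
    (hcl : IsClosed 𝒳) (hconv : Convex ℝ 𝒳) :
    ∃ Pr : E → E, (∀ z, Pr z ∈ 𝒳) ∧ (∀ z, ∀ y ∈ 𝒳, ⟪z - Pr z, y - Pr z⟫_ℝ ≤ 0)
      ∧ LipschitzWith 1 Pr := by
  have hex : ∀ z : E, ∃ v, v ∈ 𝒳 ∧ ∀ y ∈ 𝒳, ⟪z - v, y - v⟫_ℝ ≤ 0 := by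
    intro z
    obtain ⟨v, hv, hnorm⟩ := exists_norm_eq_iInf_of_complete_convex hne hcl.isComplete hconv z
    exact ⟨v, hv, (norm_eq_iInf_iff_real_inner_le_zero hconv hv).mp hnorm⟩
  choose Pr hmem hvar using hex
  refine ⟨Pr, hmem, hvar, ?_⟩
  have key : ∀ z w : E, ‖Pr z - Pr w‖ ≤ ‖z - w‖ := by
    intro z w
    have h1 := hvar z (Pr w) (hmem w)
    have h2 := hvar w (Pr z) (hmem z)
    have hsq : ‖Pr z - Pr w‖ ^ 2 ≤ ⟪z - w, Pr z - Pr w⟫_ℝ := by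
      have e1 : ⟪z - w, Pr z - Pr w⟫_ℝ - ⟪Pr z - Pr w, Pr z - Pr w⟫_ℝ
          = ⟪(z - Pr z) - (w - Pr w), Pr z - Pr w⟫_ℝ := by
        rw [show (z - Pr z) - (w - Pr w) = (z - w) - (Pr z - Pr w) by abel]
        simp only [inner_sub_left]
      have e2 : ⟪(z - Pr z) - (w - Pr w), Pr z - Pr w⟫_ℝ
          = ⟪z - Pr z, Pr z - Pr w⟫_ℝ - ⟪w - Pr w, Pr z - Pr w⟫_ℝ := inner_sub_left _ _ _
      have e3 : ⟪z - Pr z, Pr z - Pr w⟫_ℝ = -⟪z - Pr z, Pr w - Pr z⟫_ℝ := by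
        rw [show Pr z - Pr w = -(Pr w - Pr z) by abel, inner_neg_right]
      have e4 : ⟪Pr z - Pr w, Pr z - Pr w⟫_ℝ = ‖Pr z - Pr w‖ ^ 2 := real_inner_self_eq_norm_sq _
      nlinarith [h1, h2]
    have hcs : ⟪z - w, Pr z - Pr w⟫_ℝ ≤ ‖z - w‖ * ‖Pr z - Pr w‖ := real_inner_le_norm _ _
    rcases eq_or_lt_of_le (norm_nonneg (Pr z - Pr w)) with h0 | h0
    · rw [← h0]; exact norm_nonneg _
    · have : ‖Pr z - Pr w‖ * ‖Pr z - Pr w‖ ≤ ‖z - w‖ * ‖Pr z - Pr w‖ := by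
        nlinarith
      exact le_of_mul_le_mul_right this h0
  exact LipschitzWith.of_dist_le_mul fun z w => by
    simpa [dist_eq_norm] using key z w

/-- Jensen-type bound: for a nonnegative square-integrable random variable,
`E[X] ≤ √B` whenever `E[X²] ≤ B`. -/
lemma spg_integral_le_sqrt {Ω : Type*} {mΩ : MeasurableSpace Ω} (μ : Measure Ω)
    [IsProbabilityMeasure μ] {X : Ω → ℝ} (hX0 : ∀ ω, 0 ≤ X ω)
    (h1 : Integrable X μ) (h2 : Integrable (fun ω => X ω ^ 2) μ)
    {B : ℝ} (hB : ∫ ω, X ω ^ 2 ∂μ ≤ B) :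
    ∫ ω, X ω ∂μ ≤ Real.sqrt B := by
  set c := ∫ ω, X ω ∂μ with hc
  have hc0 : 0 ≤ c := integral_nonneg hX0
  have key : c ^ 2 ≤ ∫ ω, X ω ^ 2 ∂μ := by
    have hint : Integrable (fun ω => X ω ^ 2 - 2 * c * X ω) μ := h2.sub (h1.const_mul _)
    have h3 : (0:ℝ) ≤ ∫ ω, (X ω - c) ^ 2 ∂μ := integral_nonneg fun ω => sq_nonneg _
    have he : (fun ω => (X ω - c) ^ 2) = fun ω => (X ω ^ 2 - 2 * c * X ω) + c ^ 2 := by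
      funext ω; ring
    rw [he, integral_add hint (integrable_const _), integral_sub h2 (h1.const_mul _),
      integral_const] at h3
    have h4 : ∫ a, 2 * c * X a ∂μ = 2 * c * c := by
      simpa [smul_eq_mul] using integral_smul (2 * c) X
    rw [h4] at h3
    simp only [measure_univ, ENNReal.toReal_one, probReal_univ, one_smul] at h3
    nlinarith [h3]
  have hB0 : (0:ℝ) ≤ B := le_trans (sq_nonneg c) (le_trans key hB)
  exact (Real.le_sqrt hc0 hB0).mpr (le_trans key hB)

/-- If `E[e | m] = 0` a.e. and `F` is `m`-measurable (with suitable integrability),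
then `E⟪e, F⟫ = 0`. -/
lemma spg_integral_inner_zero {Ω : Type*} {m : MeasurableSpace Ω} {m0 : MeasurableSpace Ω}
    {μ : Measure Ω} [IsProbabilityMeasure μ] (hm : m ≤ m0) {d : ℕ}
    {e F : Ω → EuclideanSpace ℝ (Fin d)} (he : Integrable e μ)
    (hcond : μ[e|m] =ᵐ[μ] 0) (hFmeas : Measurable[m] F)
    (heF : ∀ i : Fin d, Integrable (fun ω => F ω i * e ω i) μ) :
    ∫ ω, ⟪e ω, F ω⟫_ℝ ∂μ = 0 := by
  haveI : SigmaFinite (μ.trim hm) := inferInstance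
  have hinner : (fun ω => ⟪e ω, F ω⟫_ℝ) = fun ω => ∑ i : Fin d, F ω i * e ω i := by
    funext ω
    rw [PiLp.inner_apply]
    exact Finset.sum_congr rfl fun i _ => by
      simp [RCLike.inner_apply, mul_comm]
  rw [hinner, integral_finset_sum _ fun i _ => heF i]
  refine Finset.sum_eq_zero fun i _ => ?_
  have hei_int : Integrable (fun ω => e ω i) μ := by
    have := (EuclideanSpace.proj i : EuclideanSpace ℝ (Fin d) →L[ℝ] ℝ).integrable_comp he
    exact this
  have hcond_i : μ[(fun ω => e ω i)|m] =ᵐ[μ] 0 := by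
    refine (ae_eq_condExp_of_forall_setIntegral_eq hm hei_int
      (fun s _ _ => (integrable_zero _ _ _).integrableOn)
      (fun s hs hμs => ?_)
      (stronglyMeasurable_zero.aestronglyMeasurable)).symm
    have h1 : ∫ ω in s, e ω ∂μ = ∫ ω in s, (μ[e|m]) ω ∂μ := (setIntegral_condExp hm he hs).symm
    have h2 : ∫ ω in s, (μ[e|m]) ω ∂μ = 0 := by
      rw [setIntegral_congr_ae (hm s hs) (hcond.mono fun ω h _ => h)]
      simp
    have h3 : ∫ ω in s, e ω i ∂μ
        = (EuclideanSpace.proj (𝕜 := ℝ) i) (∫ ω in s, e ω ∂μ) :=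
      (EuclideanSpace.proj (𝕜 := ℝ) i).integral_comp_comm he.integrableOn
    simp [h3, h1, h2]
  have hFi_sm : StronglyMeasurable[m] (fun ω => F ω i) :=
    (((EuclideanSpace.proj (𝕜 := ℝ) i).continuous.measurable).comp hFmeas).stronglyMeasurable
  have hmul := condExp_mul_of_stronglyMeasurable_left (μ := μ) (m := m) hFi_sm
    (heF i) hei_int
  have hzero : μ[(fun ω => F ω i) * (fun ω => e ω i)|m] =ᵐ[μ] 0 := by
    refine hmul.trans ?_
    filter_upwards [hcond_i] with ω hω
    simp [Pi.mul_apply, hω]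
  calc ∫ ω, F ω i * e ω i ∂μ
      = ∫ ω, ((fun ω => F ω i) * fun ω => e ω i) ω ∂μ := by simp [Pi.mul_apply]
    _ = ∫ ω, (μ[(fun ω => F ω i) * (fun ω => e ω i)|m]) ω ∂μ := (integral_condExp hm).symm
    _ = 0 := by rw [integral_congr_ae hzero]; simp

end Aux2

lemma spg_abs_coord_le_norm {d : ℕ} (a : EuclideanSpace ℝ (Fin d)) (i : Fin d) :
    |a i| ≤ ‖a‖ := by
  rw [EuclideanSpace.norm_eq, ← Real.sqrt_sq_eq_abs]
  apply Real.sqrt_le_sqrt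
  have := Finset.single_le_sum (f := fun j => ‖a j‖ ^ 2)
    (fun j _ => sq_nonneg _) (Finset.mem_univ i)
  simpa [Real.norm_eq_abs, sq_abs] using this

set_option maxHeartbeats 1000000 in
/-- Convergence theorem (case ν = 1, Lipschitz gradient) for the mini-batch stochastic
projected gradient method. -/
theorem spg_convergence_lipschitz
    {Ω : Type*} {m0 : MeasurableSpace Ω} (P : Measure Ω) [IsProbabilityMeasure P]
    {d : ℕ} (𝒳 : Set (EuclideanSpace ℝ (Fin d)))
    (h𝒳ne : 𝒳.Nonempty) (h𝒳closed : IsClosed 𝒳) (h𝒳conv : Convex ℝ 𝒳)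
    (L : ℝ) (hL : 0 < L) (σ : ℝ) (hσ : 0 < σ)
    (f : EuclideanSpace ℝ (Fin d) → ℝ) (hf : Differentiable ℝ f)
    (hLip : ∀ x ∈ 𝒳, ∀ y ∈ 𝒳, ‖gradient f y - gradient f x‖ ≤ L * ‖y - x‖)
    (fstar : ℝ) (hfstar : ∀ x ∈ 𝒳, fstar ≤ f x)
    (ℱ : Filtration ℕ m0)
    (γ : ℕ → ℝ) (hγ : ∀ k, 0 < γ k)
    (γbar : ℝ) (hγbar : 0 < γbar) (hγle : ∀ k, γ k ≤ γbar)
    (mb : ℕ → ℕ) (hmb : ∀ k, 1 ≤ mb k)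
    (x G : ℕ → Ω → EuclideanSpace ℝ (Fin d))
    (x0 : EuclideanSpace ℝ (Fin d)) (hx0 : ∀ ω, x 0 ω = x0)
    (hxmeas : ∀ k, Measurable[ℱ k] (x k))
    (hxmem : ∀ k ω, x k ω ∈ 𝒳)
    (hGint : ∀ k, Integrable (G k) P)
    (hGcond : ∀ k, P[G k|ℱ k] =ᵐ[P] fun ω => gradient f (x k ω))
    (hGvarInt : ∀ k, Integrable (fun ω => ‖gradient f (x k ω) - G k ω‖ ^ 2) P)
    (hGvar : ∀ k, ∫ ω, ‖gradient f (x k ω) - G k ω‖ ^ 2 ∂P ≤ σ ^ 2 / mb k)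
    (hGmomInt : ∀ k, Integrable (fun ω => ‖G k ω‖ ^ 2) P)
    (hGmom : ∀ k, ∫ ω, ‖G k ω‖ ^ 2 ∂P ≤ σ ^ 2)
    (hproj : ∀ k, ∀ᵐ ω ∂P,
      ∀ y ∈ 𝒳, ⟪(x k ω - γ k • G k ω) - x (k + 1) ω, y - x (k + 1) ω⟫_ℝ ≤ 0)
    (N : ℕ) (hN : 1 ≤ N) :
    Finset.inf' (Finset.range N) (Finset.nonempty_range_iff.mpr (Nat.one_le_iff_ne_zero.mp hN))
      (fun k => ∫ ω, Metric.infDist (0 : EuclideanSpace ℝ (Fin d))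
        {v | ∃ u, (∀ y ∈ 𝒳, ⟪u, y - x (k + 1) ω⟫_ℝ ≤ 0)
          ∧ v = gradient f (x (k + 1) ω) + u} ∂P)
      ≤ ((1 + L * γbar) * Real.sqrt N
          * Real.sqrt ((f x0 - fstar) + σ ^ 2 * ∑ k ∈ Finset.range N, γ k / mb k
              + L * σ ^ 2 / 2 * ∑ k ∈ Finset.range N, γ k ^ 2)
         + σ * ∑ k ∈ Finset.range N, Real.sqrt (γ k / mb k))
        / ∑ k ∈ Finset.range N, Real.sqrt (γ k) := by
  classical
  obtain ⟨Pr, hPmem, hPvar, hPlip⟩ := spg_proj_exists h𝒳ne h𝒳closed h𝒳conv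
  have hPnonexp : ∀ z w, ‖Pr z - Pr w‖ ≤ ‖z - w‖ := fun z w => by
    simpa [dist_eq_norm] using hPlip.dist_le_mul z w
  have hPfix : ∀ z ∈ 𝒳, Pr z = z := fun z hz =>
    spg_proj_unique (hPmem z) hz (hPvar z) (fun y hy => by simp)
  -- gradient continuity / measurability
  have hgcont : ContinuousOn (gradient f) 𝒳 := by
    have hlon : LipschitzOnWith (Real.toNNReal L) (gradient f) 𝒳 :=
      LipschitzOnWith.of_dist_le_mul fun a ha b hb => by
        rw [dist_eq_norm, dist_eq_norm]
        calc ‖gradient f a - gradient f b‖ ≤ L * ‖a - b‖ := hLip b hb a ha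
          _ = (Real.toNNReal L : ℝ) * ‖a - b‖ := by rw [Real.coe_toNNReal L hL.le]
    exact hlon.continuousOn
  have hgmeas : ∀ k, Measurable[ℱ k] fun ω => gradient f (x k ω) := by
    intro k
    have hsub : Measurable[ℱ k] (fun ω => (⟨x k ω, hxmem k ω⟩ : 𝒳)) :=
      (hxmeas k).subtype_mk
    exact (hgcont.restrict.measurable).comp hsub
  have hxm0 : ∀ k, Measurable (x k) := fun k => (hxmeas k).mono (ℱ.le k) le_rfl
  have hgm0 : ∀ k, Measurable fun ω => gradient f (x k ω) := fun k =>
    (hgmeas k).mono (ℱ.le k) le_rfl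
  have hGaesm : ∀ k, AEStronglyMeasurable (G k) P := fun k => (hGint k).aestronglyMeasurable
  have heaesm : ∀ k, AEStronglyMeasurable (fun ω => gradient f (x k ω) - G k ω) P := fun k =>
    ((hgm0 k).stronglyMeasurable.aestronglyMeasurable).sub (hGaesm k)
  have heL2 : ∀ k, MemLp (fun ω => gradient f (x k ω) - G k ω) 2 P := fun k =>
    (memLp_two_iff_integrable_sq_norm (heaesm k)).mpr (hGvarInt k)
  have hGL2 : ∀ k, MemLp (G k) 2 P := fun k =>
    (memLp_two_iff_integrable_sq_norm (hGaesm k)).mpr (hGmomInt k)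
  have hgL2 : ∀ k, MemLp (fun ω => gradient f (x k ω)) 2 P := by
    intro k
    have h := (heL2 k).add (hGL2 k)
    have hfun : (fun ω => gradient f (x k ω))
        = fun ω => (gradient f (x k ω) - G k ω) + G k ω := by
      funext ω; abel
    rw [hfun]; exact h
  have heInt : ∀ k, Integrable (fun ω => gradient f (x k ω) - G k ω) P := fun k =>
    (heL2 k).integrable one_le_two
  have hgInt : ∀ k, Integrable (fun ω => gradient f (x k ω)) P := fun k =>
    (hgL2 k).integrable one_le_two
  have hg2Int : ∀ k, Integrable (fun ω => ‖gradient f (x k ω)‖ ^ 2) P := fun k =>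
    (memLp_two_iff_integrable_sq_norm
      ((hgm0 k).stronglyMeasurable.aestronglyMeasurable)).mp (hgL2 k)
  -- identification of the iterate with the projection
  have hxid : ∀ k, ∀ᵐ ω ∂P, x (k+1) ω = Pr (x k ω - γ k • G k ω) := fun k =>
    (hproj k).mono fun ω hω => spg_proj_unique (hxmem (k+1) ω) (hPmem _) hω (hPvar _)
  have hdnorm : ∀ k, ∀ᵐ ω ∂P, ‖x (k+1) ω - x k ω‖ ≤ γ k * ‖G k ω‖ := by
    intro k
    filter_upwards [hxid k] with ω hω
    rw [hω]
    calc ‖Pr (x k ω - γ k • G k ω) - x k ω‖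
        = ‖Pr (x k ω - γ k • G k ω) - Pr (x k ω)‖ := by rw [hPfix _ (hxmem k ω)]
      _ ≤ ‖(x k ω - γ k • G k ω) - x k ω‖ := hPnonexp _ _
      _ = γ k * ‖G k ω‖ := by
          rw [show (x k ω - γ k • G k ω) - x k ω = -(γ k • G k ω) by abel, norm_neg,
            norm_smul]
          simp [abs_of_pos (hγ k)]
  have hdaesm : ∀ k, AEStronglyMeasurable (fun ω => x (k+1) ω - x k ω) P := fun k =>
    (((hxm0 (k+1)).sub (hxm0 k)).stronglyMeasurable).aestronglyMeasurable
  have hd2Int : ∀ k, Integrable (fun ω => ‖x (k+1) ω - x k ω‖ ^ 2) P := by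
    intro k
    refine Integrable.mono' ((hGmomInt k).const_mul (γ k ^ 2)) ?_ ?_
    · have := ((hdaesm k).norm.mul (hdaesm k).norm)
      simpa [pow_two] using (show AEStronglyMeasurable
        (fun ω => ‖x (k+1) ω - x k ω‖ * ‖x (k+1) ω - x k ω‖) P from this)
    · filter_upwards [hdnorm k] with ω hω
      rw [Real.norm_eq_abs, abs_of_nonneg (sq_nonneg _)]
      calc ‖x (k+1) ω - x k ω‖ ^ 2 ≤ (γ k * ‖G k ω‖) ^ 2 :=
            pow_le_pow_left₀ (norm_nonneg _) hω 2
        _ = γ k ^ 2 * ‖G k ω‖ ^ 2 := by ring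
  have hd1Int : ∀ k, Integrable (fun ω => ‖x (k+1) ω - x k ω‖) P := by
    intro k
    refine Integrable.mono' (((hGint k).norm).const_mul (γ k)) ((hdaesm k).norm) ?_
    filter_upwards [hdnorm k] with ω hω
    rw [Real.norm_eq_abs, abs_of_nonneg (norm_nonneg _)]
    exact hω
  have hedInt : ∀ k, Integrable
      (fun ω => ⟪gradient f (x k ω) - G k ω, x (k+1) ω - x k ω⟫_ℝ) P := by
    intro k
    refine Integrable.mono' (((hGvarInt k).add (hd2Int k)).div_const 2)
      ((heaesm k).inner (hdaesm k)) ?_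
    filter_upwards with ω
    simp only [Pi.add_apply]
    rw [Real.norm_eq_abs]
    have h1 := abs_real_inner_le_norm (gradient f (x k ω) - G k ω) (x (k+1) ω - x k ω)
    nlinarith [sq_nonneg (‖gradient f (x k ω) - G k ω‖ - ‖x (k+1) ω - x k ω‖),
      abs_nonneg (⟪gradient f (x k ω) - G k ω, x (k+1) ω - x k ω⟫_ℝ)]
  -- one-step descent inequality
  have hstep : ∀ k, ∀ᵐ ω ∂P,
      ‖x (k+1) ω - x k ω‖ ^ 2 / γ k
        - ⟪gradient f (x k ω) - G k ω, x (k+1) ω - x k ω⟫_ℝ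
        - L / 2 * γ k ^ 2 * ‖G k ω‖ ^ 2
      ≤ f (x k ω) - f (x (k+1) ω) := by
    intro k
    filter_upwards [hproj k, hdnorm k] with ω hω hdn
    set dv := x (k+1) ω - x k ω with hdv
    have hdesc := spg_descent hf h𝒳conv hL.le hLip (hxmem k ω) (hxmem (k+1) ω)
    have hproj1 := hω (x k ω) (hxmem k ω)
    have h1 : ‖dv‖ ^ 2 + γ k * ⟪G k ω, dv⟫_ℝ ≤ 0 := by
      have he1 : (x k ω - γ k • G k ω) - x (k+1) ω = -(dv + γ k • G k ω) := by
        rw [hdv]; abel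
      have he2 : x k ω - x (k+1) ω = -dv := by rw [hdv]; abel
      rw [he1, he2, inner_neg_neg, inner_add_left, real_inner_smul_left,
        real_inner_self_eq_norm_sq] at hproj1
      linarith
    have h2 : ‖dv‖ ^ 2 / γ k ≤ -⟪G k ω, dv⟫_ℝ := by
      rw [div_le_iff₀ (hγ k)]
      nlinarith [h1]
    have h3 : ⟪gradient f (x k ω), dv⟫_ℝ
        = ⟪gradient f (x k ω) - G k ω, dv⟫_ℝ + ⟪G k ω, dv⟫_ℝ := by
      rw [← inner_add_left]; congr 1; abel
    have h4 : L / 2 * ‖dv‖ ^ 2 ≤ L / 2 * (γ k ^ 2 * ‖G k ω‖ ^ 2) := by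
      have : ‖dv‖ ^ 2 ≤ γ k ^ 2 * ‖G k ω‖ ^ 2 := by
        calc ‖dv‖ ^ 2 ≤ (γ k * ‖G k ω‖) ^ 2 := pow_le_pow_left₀ (norm_nonneg _) hdn 2
          _ = γ k ^ 2 * ‖G k ω‖ ^ 2 := by ring
      nlinarith [hL.le]
    rw [h3] at hdesc
    linarith
  -- expectation of the inner-product error term
  have hEk : ∀ k, ∫ ω, ⟪gradient f (x k ω) - G k ω, x (k+1) ω - x k ω⟫_ℝ ∂P
      ≤ γ k * (σ ^ 2 / mb k) := by
    intro k
    -- the deterministic direction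
    set F : Ω → EuclideanSpace ℝ (Fin d) :=
      fun ω => Pr (x k ω - γ k • gradient f (x k ω)) - x k ω with hF
    have hFmeas : Measurable[ℱ k] F :=
      ((hPlip.continuous.measurable).comp
        ((hxmeas k).sub ((hgmeas k).const_smul (γ k)))).sub (hxmeas k)
    have hFbound : ∀ ω, ‖F ω‖ ≤ γ k * ‖gradient f (x k ω)‖ := by
      intro ω
      calc ‖F ω‖ = ‖Pr (x k ω - γ k • gradient f (x k ω)) - Pr (x k ω)‖ := by
            rw [hF]; rw [hPfix _ (hxmem k ω)]
        _ ≤ ‖(x k ω - γ k • gradient f (x k ω)) - x k ω‖ := hPnonexp _ _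
        _ = γ k * ‖gradient f (x k ω)‖ := by
            rw [show (x k ω - γ k • gradient f (x k ω)) - x k ω
              = -(γ k • gradient f (x k ω)) by abel, norm_neg, norm_smul]
            simp [abs_of_pos (hγ k)]
    -- conditional expectation of the error is zero
    have hcond0 : P[(fun ω => gradient f (x k ω) - G k ω)|ℱ k] =ᵐ[P] 0 := by
      have h1 := condExp_sub (m := ℱ k) (μ := P) (hgInt k) (hGint k)
      have h2 : P[(fun ω => gradient f (x k ω))|ℱ k]
          = fun ω => gradient f (x k ω) :=
        condExp_of_stronglyMeasurable (ℱ.le k) ((hgmeas k).stronglyMeasurable) (hgInt k)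
      refine h1.trans ?_
      rw [h2]
      filter_upwards [hGcond k] with ω hω
      simp [Pi.sub_apply, hω]
    -- product integrability per coordinate
    have heFi : ∀ i : Fin d, Integrable
        (fun ω => F ω i * (gradient f (x k ω) - G k ω) i) P := by
      intro i
      refine Integrable.mono'
        ((((hg2Int k).add (hGvarInt k)).div_const 2).const_mul (γ k)) ?_ ?_
      · have hFm0 : Measurable F := hFmeas.mono (ℱ.le k) le_rfl
        have h1 : AEStronglyMeasurable (fun ω => F ω i) P :=
          ((EuclideanSpace.proj (𝕜 := ℝ) i).continuous.measurable.comp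
            hFm0).stronglyMeasurable.aestronglyMeasurable
        have h2 : AEStronglyMeasurable (fun ω => (gradient f (x k ω) - G k ω) i) P :=
          (EuclideanSpace.proj (𝕜 := ℝ) i).continuous.comp_aestronglyMeasurable (heaesm k)
        exact h1.mul h2
      · filter_upwards with ω
        rw [Real.norm_eq_abs, abs_mul]
        have hb1 : |F ω i| ≤ ‖F ω‖ := spg_abs_coord_le_norm _ i
        have hb2 : |(gradient f (x k ω) - G k ω) i| ≤ ‖gradient f (x k ω) - G k ω‖ :=
          spg_abs_coord_le_norm _ i
        have hb3 : |F ω i| * |(gradient f (x k ω) - G k ω) i|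
            ≤ ‖F ω‖ * ‖gradient f (x k ω) - G k ω‖ :=
          mul_le_mul hb1 hb2 (abs_nonneg _) (norm_nonneg _)
        have hb4 : ‖F ω‖ * ‖gradient f (x k ω) - G k ω‖
            ≤ (γ k * ‖gradient f (x k ω)‖) * ‖gradient f (x k ω) - G k ω‖ :=
          mul_le_mul_of_nonneg_right (hFbound ω) (norm_nonneg _)
        have hb5 : (γ k * ‖gradient f (x k ω)‖) * ‖gradient f (x k ω) - G k ω‖
            ≤ γ k * ((‖gradient f (x k ω)‖ ^ 2 + ‖gradient f (x k ω) - G k ω‖ ^ 2) / 2) := by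
          nlinarith [sq_nonneg (‖gradient f (x k ω)‖ - ‖gradient f (x k ω) - G k ω‖),
            (hγ k).le]
        calc |F ω i| * |(gradient f (x k ω) - G k ω) i|
            ≤ γ k * ((‖gradient f (x k ω)‖ ^ 2 + ‖gradient f (x k ω) - G k ω‖ ^ 2) / 2) :=
              le_trans hb3 (le_trans hb4 hb5)
          _ = γ k * (((fun ω => ‖gradient f (x k ω)‖ ^ 2)
              + fun ω => ‖gradient f (x k ω) - G k ω‖ ^ 2) ω / 2) := by
              simp [Pi.add_apply]
    -- the inner product against the predictable direction has zero mean
    have hinner0 : ∫ ω, ⟪(fun ω => gradient f (x k ω) - G k ω) ω, F ω⟫_ℝ ∂P = 0 :=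
      spg_integral_inner_zero (ℱ.le k) (heInt k) hcond0 hFmeas heFi
    -- integrability of that inner product
    have hinnerFInt : Integrable (fun ω => ⟪gradient f (x k ω) - G k ω, F ω⟫_ℝ) P := by
      refine Integrable.mono'
        ((((hg2Int k).add (hGvarInt k)).div_const 2).const_mul (γ k))
        ((heaesm k).inner ((hFmeas.mono (ℱ.le k)
          le_rfl).stronglyMeasurable.aestronglyMeasurable)) ?_
      filter_upwards with ω
      rw [Real.norm_eq_abs]
      have h1 := abs_real_inner_le_norm (gradient f (x k ω) - G k ω) (F ω)
      have hb4 : ‖gradient f (x k ω) - G k ω‖ * ‖F ω‖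
          ≤ ‖gradient f (x k ω) - G k ω‖ * (γ k * ‖gradient f (x k ω)‖) :=
        mul_le_mul_of_nonneg_left (hFbound ω) (norm_nonneg _)
      have hb5 : ‖gradient f (x k ω) - G k ω‖ * (γ k * ‖gradient f (x k ω)‖)
          ≤ γ k * ((‖gradient f (x k ω)‖ ^ 2 + ‖gradient f (x k ω) - G k ω‖ ^ 2) / 2) := by
        nlinarith [sq_nonneg (‖gradient f (x k ω)‖ - ‖gradient f (x k ω) - G k ω‖),
          (hγ k).le]
      have : |⟪gradient f (x k ω) - G k ω, F ω⟫_ℝ|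
          ≤ γ k * ((‖gradient f (x k ω)‖ ^ 2 + ‖gradient f (x k ω) - G k ω‖ ^ 2) / 2) := by
        linarith
      simpa [Pi.add_apply] using this
    -- pointwise comparison
    have hptw : ∀ᵐ ω ∂P,
        ⟪gradient f (x k ω) - G k ω, x (k+1) ω - x k ω⟫_ℝ
          ≤ ⟪gradient f (x k ω) - G k ω, F ω⟫_ℝ
            + γ k * ‖gradient f (x k ω) - G k ω‖ ^ 2 := by
      filter_upwards [hxid k] with ω hω
      have hdecomp : x (k+1) ω - x k ω = F ω
          + (Pr (x k ω - γ k • G k ω) - Pr (x k ω - γ k • gradient f (x k ω))) := by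
        rw [hω, hF]; beta_reduce; abel
      rw [hdecomp, inner_add_right]
      have h2 := real_inner_le_norm (gradient f (x k ω) - G k ω)
        (Pr (x k ω - γ k • G k ω) - Pr (x k ω - γ k • gradient f (x k ω)))
      have h3 : ‖Pr (x k ω - γ k • G k ω) - Pr (x k ω - γ k • gradient f (x k ω))‖
          ≤ ‖(x k ω - γ k • G k ω) - (x k ω - γ k • gradient f (x k ω))‖ := hPnonexp _ _
      have h4 : ‖(x k ω - γ k • G k ω) - (x k ω - γ k • gradient f (x k ω))‖
          = γ k * ‖gradient f (x k ω) - G k ω‖ := by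
        rw [show (x k ω - γ k • G k ω) - (x k ω - γ k • gradient f (x k ω))
          = γ k • (gradient f (x k ω) - G k ω) by rw [smul_sub]; abel, norm_smul]
        simp [abs_of_pos (hγ k)]
      have h5 : ⟪gradient f (x k ω) - G k ω,
          Pr (x k ω - γ k • G k ω) - Pr (x k ω - γ k • gradient f (x k ω))⟫_ℝ
          ≤ γ k * ‖gradient f (x k ω) - G k ω‖ ^ 2 := by
        have h6 : ‖gradient f (x k ω) - G k ω‖
            * ‖Pr (x k ω - γ k • G k ω) - Pr (x k ω - γ k • gradient f (x k ω))‖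
            ≤ ‖gradient f (x k ω) - G k ω‖ * (γ k * ‖gradient f (x k ω) - G k ω‖) := by
          rw [← h4]
          exact mul_le_mul_of_nonneg_left h3 (norm_nonneg _)
        nlinarith [h2, h6]
      linarith
    -- integrate the comparison
    have hrhsInt : Integrable (fun ω => ⟪gradient f (x k ω) - G k ω, F ω⟫_ℝ
        + γ k * ‖gradient f (x k ω) - G k ω‖ ^ 2) P :=
      hinnerFInt.add ((hGvarInt k).const_mul (γ k))
    calc ∫ ω, ⟪gradient f (x k ω) - G k ω, x (k+1) ω - x k ω⟫_ℝ ∂P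
        ≤ ∫ ω, (⟪gradient f (x k ω) - G k ω, F ω⟫_ℝ
            + γ k * ‖gradient f (x k ω) - G k ω‖ ^ 2) ∂P :=
          integral_mono_ae (hedInt k) hrhsInt hptw
      _ = (∫ ω, ⟪gradient f (x k ω) - G k ω, F ω⟫_ℝ ∂P)
            + γ k * ∫ ω, ‖gradient f (x k ω) - G k ω‖ ^ 2 ∂P := by
          rw [integral_add hinnerFInt ((hGvarInt k).const_mul (γ k))]
          congr 1
          simpa [smul_eq_mul] using
            integral_smul (γ k) (fun ω => ‖gradient f (x k ω) - G k ω‖ ^ 2)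
      _ ≤ 0 + γ k * (σ ^ 2 / mb k) := by
          rw [hinner0]
          exact add_le_add le_rfl (mul_le_mul_of_nonneg_left (hGvar k) (hγ k).le)
      _ = γ k * (σ ^ 2 / mb k) := by ring
  -- telescoping sum, almost everywhere
  have hsumae : ∀ᵐ ω ∂P, ∑ k ∈ Finset.range N,
      (‖x (k+1) ω - x k ω‖ ^ 2 / γ k
        - ⟪gradient f (x k ω) - G k ω, x (k+1) ω - x k ω⟫_ℝ
        - L / 2 * γ k ^ 2 * ‖G k ω‖ ^ 2)
      ≤ f x0 - fstar := by
    filter_upwards [ae_all_iff.mpr hstep] with ω hω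
    calc ∑ k ∈ Finset.range N, (‖x (k+1) ω - x k ω‖ ^ 2 / γ k
          - ⟪gradient f (x k ω) - G k ω, x (k+1) ω - x k ω⟫_ℝ
          - L / 2 * γ k ^ 2 * ‖G k ω‖ ^ 2)
        ≤ ∑ k ∈ Finset.range N, (f (x k ω) - f (x (k+1) ω)) :=
          Finset.sum_le_sum fun k _ => hω k
      _ = f (x 0 ω) - f (x N ω) := Finset.sum_range_sub' (fun k => f (x k ω)) N
      _ ≤ f x0 - fstar := by
          rw [hx0 ω]
          have := hfstar _ (hxmem N ω)
          linarith
  have htermInt : ∀ k, Integrable (fun ω => ‖x (k+1) ω - x k ω‖ ^ 2 / γ k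
      - ⟪gradient f (x k ω) - G k ω, x (k+1) ω - x k ω⟫_ℝ
      - L / 2 * γ k ^ 2 * ‖G k ω‖ ^ 2) P := fun k =>
    (((hd2Int k).div_const (γ k)).sub (hedInt k)).sub ((hGmomInt k).const_mul (L / 2 * γ k ^ 2))
  have hsumInt : ∑ k ∈ Finset.range N, ∫ ω, (‖x (k+1) ω - x k ω‖ ^ 2 / γ k
      - ⟪gradient f (x k ω) - G k ω, x (k+1) ω - x k ω⟫_ℝ
      - L / 2 * γ k ^ 2 * ‖G k ω‖ ^ 2) ∂P ≤ f x0 - fstar := by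
    have h1 : Integrable (fun ω => ∑ k ∈ Finset.range N,
        (‖x (k+1) ω - x k ω‖ ^ 2 / γ k
          - ⟪gradient f (x k ω) - G k ω, x (k+1) ω - x k ω⟫_ℝ
          - L / 2 * γ k ^ 2 * ‖G k ω‖ ^ 2)) P :=
      integrable_finset_sum _ fun k _ => htermInt k
    have h2 := integral_mono_ae h1 (integrable_const (f x0 - fstar)) hsumae
    rw [integral_const] at h2
    simp only [measure_univ, ENNReal.toReal_one, probReal_univ, one_smul] at h2
    rwa [integral_finset_sum _ fun k _ => htermInt k] at h2
  have hsplit : ∀ k, ∫ ω, (‖x (k+1) ω - x k ω‖ ^ 2 / γ k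
      - ⟪gradient f (x k ω) - G k ω, x (k+1) ω - x k ω⟫_ℝ
      - L / 2 * γ k ^ 2 * ‖G k ω‖ ^ 2) ∂P
      = (∫ ω, ‖x (k+1) ω - x k ω‖ ^ 2 ∂P) / γ k
        - ∫ ω, ⟪gradient f (x k ω) - G k ω, x (k+1) ω - x k ω⟫_ℝ ∂P
        - L / 2 * γ k ^ 2 * ∫ ω, ‖G k ω‖ ^ 2 ∂P := by
    intro k
    have i1 : Integrable (fun ω => ‖x (k+1) ω - x k ω‖ ^ 2 / γ k
        - ⟪gradient f (x k ω) - G k ω, x (k+1) ω - x k ω⟫_ℝ) P :=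
      ((hd2Int k).div_const (γ k)).sub (hedInt k)
    rw [integral_sub i1 ((hGmomInt k).const_mul (L / 2 * γ k ^ 2)),
      integral_sub ((hd2Int k).div_const (γ k)) (hedInt k), integral_div]
    congr 1
    exact integral_const_mul (L / 2 * γ k ^ 2) (fun ω => ‖G k ω‖ ^ 2)
  -- main summed bound
  have hDsum : ∑ k ∈ Finset.range N, (∫ ω, ‖x (k+1) ω - x k ω‖ ^ 2 ∂P) / γ k
      ≤ (f x0 - fstar) + σ ^ 2 * ∑ k ∈ Finset.range N, γ k / mb k
        + L * σ ^ 2 / 2 * ∑ k ∈ Finset.range N, γ k ^ 2 := by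
    have h1 : ∀ k ∈ Finset.range N, (∫ ω, ‖x (k+1) ω - x k ω‖ ^ 2 ∂P) / γ k
        ≤ (∫ ω, (‖x (k+1) ω - x k ω‖ ^ 2 / γ k
          - ⟪gradient f (x k ω) - G k ω, x (k+1) ω - x k ω⟫_ℝ
          - L / 2 * γ k ^ 2 * ‖G k ω‖ ^ 2) ∂P)
          + (γ k * (σ ^ 2 / mb k) + L / 2 * γ k ^ 2 * σ ^ 2) := by
      intro k _
      rw [hsplit k]
      have h2 := hEk k
      have h3 := hGmom k
      have h4 : L / 2 * γ k ^ 2 * ∫ ω, ‖G k ω‖ ^ 2 ∂P ≤ L / 2 * γ k ^ 2 * σ ^ 2 :=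
        mul_le_mul_of_nonneg_left h3 (by positivity)
      linarith
    calc ∑ k ∈ Finset.range N, (∫ ω, ‖x (k+1) ω - x k ω‖ ^ 2 ∂P) / γ k
        ≤ ∑ k ∈ Finset.range N, ((∫ ω, (‖x (k+1) ω - x k ω‖ ^ 2 / γ k
            - ⟪gradient f (x k ω) - G k ω, x (k+1) ω - x k ω⟫_ℝ
            - L / 2 * γ k ^ 2 * ‖G k ω‖ ^ 2) ∂P)
            + (γ k * (σ ^ 2 / mb k) + L / 2 * γ k ^ 2 * σ ^ 2)) :=
          Finset.sum_le_sum h1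
      _ = (∑ k ∈ Finset.range N, ∫ ω, (‖x (k+1) ω - x k ω‖ ^ 2 / γ k
            - ⟪gradient f (x k ω) - G k ω, x (k+1) ω - x k ω⟫_ℝ
            - L / 2 * γ k ^ 2 * ‖G k ω‖ ^ 2) ∂P)
            + ∑ k ∈ Finset.range N, (γ k * (σ ^ 2 / mb k) + L / 2 * γ k ^ 2 * σ ^ 2) :=
          Finset.sum_add_distrib
      _ ≤ (f x0 - fstar) + σ ^ 2 * ∑ k ∈ Finset.range N, γ k / mb k
            + L * σ ^ 2 / 2 * ∑ k ∈ Finset.range N, γ k ^ 2 := by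
          have h5 : ∑ k ∈ Finset.range N, (γ k * (σ ^ 2 / mb k) + L / 2 * γ k ^ 2 * σ ^ 2)
              = σ ^ 2 * ∑ k ∈ Finset.range N, γ k / mb k
                + L * σ ^ 2 / 2 * ∑ k ∈ Finset.range N, γ k ^ 2 := by
            rw [Finset.sum_add_distrib, Finset.mul_sum, Finset.mul_sum]
            congr 1
            · exact Finset.sum_congr rfl fun k _ => by ring
            · exact Finset.sum_congr rfl fun k _ => by ring
          linarith [hsumInt]
  -- per-iteration bound on the expected stationarity measure
  have hdistb : ∀ k, ∫ ω, Metric.infDist (0 : EuclideanSpace ℝ (Fin d))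
      {v | ∃ u, (∀ y ∈ 𝒳, ⟪u, y - x (k + 1) ω⟫_ℝ ≤ 0)
        ∧ v = gradient f (x (k + 1) ω) + u} ∂P
      ≤ (1 + L * γbar) / γ k * Real.sqrt (∫ ω, ‖x (k+1) ω - x k ω‖ ^ 2 ∂P)
        + Real.sqrt (σ ^ 2 / mb k) := by
    intro k
    have hrhsInt : Integrable (fun ω => (1 + L * γbar) / γ k * ‖x (k+1) ω - x k ω‖
        + ‖gradient f (x k ω) - G k ω‖) P :=
      ((hd1Int k).const_mul _).add (heInt k).norm
    have hptw : ∀ᵐ ω ∂P, Metric.infDist (0 : EuclideanSpace ℝ (Fin d))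
        {v | ∃ u, (∀ y ∈ 𝒳, ⟪u, y - x (k + 1) ω⟫_ℝ ≤ 0)
          ∧ v = gradient f (x (k + 1) ω) + u}
        ≤ (1 + L * γbar) / γ k * ‖x (k+1) ω - x k ω‖
          + ‖gradient f (x k ω) - G k ω‖ := by
      filter_upwards [hproj k] with ω hω
      set u' : EuclideanSpace ℝ (Fin d) :=
        (γ k)⁻¹ • ((x k ω - γ k • G k ω) - x (k+1) ω) with hu'def
      have hu' : ∀ y ∈ 𝒳, ⟪u', y - x (k+1) ω⟫_ℝ ≤ 0 := by
        intro y hy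
        rw [hu'def, real_inner_smul_left]
        have := mul_le_mul_of_nonneg_left (hω y hy) (inv_nonneg.mpr (hγ k).le)
        simpa using this
      have hmemS : gradient f (x (k+1) ω) + u' ∈
          {v | ∃ u, (∀ y ∈ 𝒳, ⟪u, y - x (k + 1) ω⟫_ℝ ≤ 0)
            ∧ v = gradient f (x (k + 1) ω) + u} := ⟨u', hu', rfl⟩
      have h1 : Metric.infDist (0 : EuclideanSpace ℝ (Fin d))
          {v | ∃ u, (∀ y ∈ 𝒳, ⟪u, y - x (k + 1) ω⟫_ℝ ≤ 0)
            ∧ v = gradient f (x (k + 1) ω) + u}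
          ≤ ‖gradient f (x (k+1) ω) + u'‖ := by
        have := Metric.infDist_le_dist_of_mem (x := (0 : EuclideanSpace ℝ (Fin d))) hmemS
        rwa [dist_zero_left] at this
      have hdecomp : gradient f (x (k+1) ω) + u'
          = (gradient f (x (k+1) ω) - gradient f (x k ω))
            + (gradient f (x k ω) - G k ω)
            + (γ k)⁻¹ • (x k ω - x (k+1) ω) := by
        rw [hu'def, show (x k ω - γ k • G k ω) - x (k+1) ω
          = (x k ω - x (k+1) ω) - γ k • G k ω by abel, smul_sub, smul_smul,
          inv_mul_cancel₀ (hγ k).ne', one_smul]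
        abel
      have h2 : ‖gradient f (x (k+1) ω) + u'‖
          ≤ ‖gradient f (x (k+1) ω) - gradient f (x k ω)‖
            + ‖gradient f (x k ω) - G k ω‖
            + ‖(γ k)⁻¹ • (x k ω - x (k+1) ω)‖ := by
        rw [hdecomp]
        exact norm_add₃_le
      have h3 : ‖gradient f (x (k+1) ω) - gradient f (x k ω)‖
          ≤ L * ‖x (k+1) ω - x k ω‖ := hLip _ (hxmem k ω) _ (hxmem (k+1) ω)
      have h4 : ‖(γ k)⁻¹ • (x k ω - x (k+1) ω)‖ = (γ k)⁻¹ * ‖x (k+1) ω - x k ω‖ := by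
        rw [norm_smul, Real.norm_eq_abs, abs_of_pos (inv_pos.mpr (hγ k)),
          norm_sub_rev]
      have h5 : L * ‖x (k+1) ω - x k ω‖ + (γ k)⁻¹ * ‖x (k+1) ω - x k ω‖
          ≤ (1 + L * γbar) / γ k * ‖x (k+1) ω - x k ω‖ := by
        have h6 : L + (γ k)⁻¹ ≤ (1 + L * γbar) / γ k := by
          rw [le_div_iff₀ (hγ k)]
          have h7 : (L + (γ k)⁻¹) * γ k = L * γ k + 1 := by
            rw [add_mul, inv_mul_cancel₀ (hγ k).ne']
          rw [h7]
          have h8 : L * γ k ≤ L * γbar := mul_le_mul_of_nonneg_left (hγle k) hL.le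
          linarith
        have := mul_le_mul_of_nonneg_right h6 (norm_nonneg (x (k+1) ω - x k ω))
        linarith [this]
      linarith
    have hmono := integral_mono_of_nonneg
      (Filter.Eventually.of_forall fun ω => Metric.infDist_nonneg) hrhsInt hptw
    have hsplit2 : ∫ ω, ((1 + L * γbar) / γ k * ‖x (k+1) ω - x k ω‖
        + ‖gradient f (x k ω) - G k ω‖) ∂P
        = (1 + L * γbar) / γ k * (∫ ω, ‖x (k+1) ω - x k ω‖ ∂P)
          + ∫ ω, ‖gradient f (x k ω) - G k ω‖ ∂P := by
      rw [integral_add ((hd1Int k).const_mul _) (heInt k).norm]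
      congr 1
      simpa [smul_eq_mul] using
        integral_smul ((1 + L * γbar) / γ k) (fun ω => ‖x (k+1) ω - x k ω‖)
    have hd1b : ∫ ω, ‖x (k+1) ω - x k ω‖ ∂P
        ≤ Real.sqrt (∫ ω, ‖x (k+1) ω - x k ω‖ ^ 2 ∂P) :=
      spg_integral_le_sqrt P (fun ω => norm_nonneg _) (hd1Int k) (hd2Int k) le_rfl
    have he1b : ∫ ω, ‖gradient f (x k ω) - G k ω‖ ∂P ≤ Real.sqrt (σ ^ 2 / mb k) :=
      spg_integral_le_sqrt P (fun ω => norm_nonneg _) (heInt k).norm (hGvarInt k) (hGvar k)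
    have hcoef : (0:ℝ) ≤ (1 + L * γbar) / γ k :=
      div_nonneg (by nlinarith [mul_nonneg hL.le hγbar.le]) (hγ k).le
    exact (hmono.trans_eq hsplit2).trans
      (add_le_add (mul_le_mul_of_nonneg_left hd1b hcoef) he1b)
  -- final assembly
  set S : ℝ := (f x0 - fstar) + σ ^ 2 * ∑ k ∈ Finset.range N, γ k / mb k
      + L * σ ^ 2 / 2 * ∑ k ∈ Finset.range N, γ k ^ 2 with hSdef
  set D : ℕ → ℝ := fun k => ∫ ω, ‖x (k+1) ω - x k ω‖ ^ 2 ∂P with hDdef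
  have hDnn : ∀ k, 0 ≤ D k := fun k => integral_nonneg fun ω => sq_nonneg _
  have hCS : ∑ k ∈ Finset.range N, Real.sqrt (D k / γ k)
      ≤ Real.sqrt N * Real.sqrt S := by
    have h1 := Finset.sum_mul_sq_le_sq_mul_sq (Finset.range N) (fun _ => (1:ℝ))
      (fun k => Real.sqrt (D k / γ k))
    simp only [one_pow, one_mul, mul_one, Finset.sum_const, Finset.card_range,
      nsmul_eq_mul] at h1
    have h2 : ∀ k ∈ Finset.range N, Real.sqrt (D k / γ k) ^ 2 = D k / γ k :=
      fun k _ => Real.sq_sqrt (div_nonneg (hDnn k) (hγ k).le)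
    rw [Finset.sum_congr rfl h2] at h1
    have h3 : (N : ℝ) * ∑ k ∈ Finset.range N, D k / γ k ≤ (N : ℝ) * S :=
      mul_le_mul_of_nonneg_left hDsum (Nat.cast_nonneg N)
    have h4 : (∑ k ∈ Finset.range N, Real.sqrt (D k / γ k)) ^ 2 ≤ (N : ℝ) * S :=
      le_trans h1 h3
    have h5 : (0:ℝ) ≤ ∑ k ∈ Finset.range N, Real.sqrt (D k / γ k) :=
      Finset.sum_nonneg fun k _ => Real.sqrt_nonneg _
    have h6 : (0:ℝ) ≤ (N : ℝ) * S := le_trans (sq_nonneg _) h4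
    have := (Real.le_sqrt h5 h6).mpr h4
    rwa [Real.sqrt_mul (Nat.cast_nonneg N)] at this
  set T : ℝ := ∑ k ∈ Finset.range N, Real.sqrt (γ k) with hTdef
  have hT : 0 < T :=
    Finset.sum_pos (fun k _ => Real.sqrt_pos.mpr (hγ k))
      (Finset.nonempty_range_iff.mpr (Nat.one_le_iff_ne_zero.mp hN))
  have hwsum : ∑ k ∈ Finset.range N, Real.sqrt (γ k)
      * ((1 + L * γbar) / γ k * Real.sqrt (D k) + Real.sqrt (σ ^ 2 / mb k))
      ≤ (1 + L * γbar) * Real.sqrt N * Real.sqrt S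
        + σ * ∑ k ∈ Finset.range N, Real.sqrt (γ k / mb k) := by
    have h1 : ∀ k ∈ Finset.range N, Real.sqrt (γ k)
        * ((1 + L * γbar) / γ k * Real.sqrt (D k) + Real.sqrt (σ ^ 2 / mb k))
        = (1 + L * γbar) * Real.sqrt (D k / γ k)
          + σ * Real.sqrt (γ k / mb k) := by
      intro k _
      have hsg : Real.sqrt (γ k) ≠ 0 := ne_of_gt (Real.sqrt_pos.mpr (hγ k))
      have hγeq : γ k = Real.sqrt (γ k) * Real.sqrt (γ k) :=
        (Real.mul_self_sqrt (hγ k).le).symm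
      have e1 : Real.sqrt (D k / γ k) = Real.sqrt (D k) / Real.sqrt (γ k) :=
        Real.sqrt_div (hDnn k) _
      have e2 : Real.sqrt (σ ^ 2 / mb k) = σ / Real.sqrt (mb k) := by
        rw [Real.sqrt_div (sq_nonneg σ), Real.sqrt_sq hσ.le]
      have e3 : Real.sqrt (γ k / mb k) = Real.sqrt (γ k) / Real.sqrt (mb k) :=
        Real.sqrt_div (hγ k).le _
      rw [e1, e2, e3, hγeq]
      field_simp
      rw [Real.sq_sqrt (sq_nonneg _)]
    rw [Finset.sum_congr rfl h1, Finset.sum_add_distrib, ← Finset.mul_sum, ← Finset.mul_sum]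
    exact add_le_add (by
      have := mul_le_mul_of_nonneg_left hCS (by positivity : (0:ℝ) ≤ 1 + L * γbar)
      calc (1 + L * γbar) * ∑ k ∈ Finset.range N, Real.sqrt (D k / γ k)
          ≤ (1 + L * γbar) * (Real.sqrt N * Real.sqrt S) := this
        _ = (1 + L * γbar) * Real.sqrt N * Real.sqrt S := by ring) le_rfl
  -- put everything together
  set I : ℕ → ℝ := fun k => ∫ ω, Metric.infDist (0 : EuclideanSpace ℝ (Fin d))
      {v | ∃ u, (∀ y ∈ 𝒳, ⟪u, y - x (k + 1) ω⟫_ℝ ≤ 0)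
        ∧ v = gradient f (x (k + 1) ω) + u} ∂P with hIdef
  rw [le_div_iff₀ hT]
  refine le_trans ?_ hwsum
  set J : ℝ := Finset.inf' (Finset.range N)
    (Finset.nonempty_range_iff.mpr (Nat.one_le_iff_ne_zero.mp hN)) I with hJdef
  have h1 : J * T = ∑ k ∈ Finset.range N, Real.sqrt (γ k) * J := by
    rw [hTdef, Finset.mul_sum]
    exact Finset.sum_congr rfl fun k _ => mul_comm _ _
  calc J * T = ∑ k ∈ Finset.range N, Real.sqrt (γ k) * J := h1
    _ ≤ ∑ k ∈ Finset.range N, Real.sqrt (γ k) * I k :=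
      Finset.sum_le_sum fun k hk =>
        mul_le_mul_of_nonneg_left (Finset.inf'_le I hk) (Real.sqrt_nonneg _)
    _ ≤ ∑ k ∈ Finset.range N, Real.sqrt (γ k)
        * ((1 + L * γbar) / γ k * Real.sqrt (D k) + Real.sqrt (σ ^ 2 / mb k)) :=
      Finset.sum_le_sum fun k hk =>
        mul_le_mul_of_nonneg_left (hdistb k) (Real.sqrt_nonneg _)
end
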